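/- Fix two alternatives, n agents, and any family (u_p)_{p ∈ [0,1]} of single-peaked utility functions, one per peak. If two mechanisms f, g : [0,1]^n → [0,1] are both continuous and strategyproof on this domain and f(P) = g(P) for every single-minded profile P ∈ {0,1}^n, then f(P) = g(P) for every profile P ∈ [0,1]^n. -/

import Mathlib

/-- `u` is single-peaked on `[0,1]` with peak `p`. -/
def SinglePeaked (p : ℝ) (u : ℝ → ℝ) : Prop :=
  ∀ q ∈ Set.Icc (0:ℝ) 1, q ≠ p → ∀ l ∈ Set.Ioo (0:ℝ) 1,
    u q < u (l * p + (1 - l) * q) ∧ u (l * p + (1 - l) * q) < u p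

/-- Strict maximum at the peak. -/
lemma sp_max {p : ℝ} {u : ℝ → ℝ} (h : SinglePeaked p u)
    {q : ℝ} (hq : q ∈ Set.Icc (0:ℝ) 1) (hqp : q ≠ p) : u q < u p := by
  have := h q hq hqp (1/2) (by constructor <;> norm_num)
  linarith [this.1, this.2]

/-- Strictly decreasing to the right of the peak. -/
lemma sp_anti {p : ℝ} {u : ℝ → ℝ} (h : SinglePeaked p u) (hp : p ∈ Set.Icc (0:ℝ) 1)
    {x y : ℝ} (hx : x ∈ Set.Icc (0:ℝ) 1) (hy : y ∈ Set.Icc (0:ℝ) 1)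
    (hpx : p ≤ x) (hxy : x < y) : u y < u x := by
  rcases eq_or_lt_of_le hpx with rfl | hpx
  · exact sp_max h hy (by linarith)
  · have hpy : p < y := hpx.trans hxy
    set l : ℝ := (y - x) / (y - p) with hl
    have hl0 : 0 < l := div_pos (by linarith) (by linarith)
    have hl1 : l < 1 := (div_lt_one (by linarith)).2 (by linarith)
    have hne : y - p ≠ 0 := by linarith
    have key : l * p + (1 - l) * y = x := by
      rw [hl, div_mul_eq_mul_div, one_sub_div hne, div_mul_eq_mul_div, ← add_div,
        div_eq_iff hne]
      ring
    have := (h y hy (by linarith) l ⟨hl0, hl1⟩).1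
    rwa [key] at this

/-- Strictly increasing to the left of the peak. -/
lemma sp_mono {p : ℝ} {u : ℝ → ℝ} (h : SinglePeaked p u) (hp : p ∈ Set.Icc (0:ℝ) 1)
    {x y : ℝ} (hx : x ∈ Set.Icc (0:ℝ) 1) (hy : y ∈ Set.Icc (0:ℝ) 1)
    (hxy : x < y) (hyp : y ≤ p) : u x < u y := by
  rcases eq_or_lt_of_le hyp with rfl | hyp
  · exact sp_max h hx (by linarith)
  · have hxp : x < p := hxy.trans hyp
    set l : ℝ := (y - x) / (p - x) with hl
    have hl0 : 0 < l := div_pos (by linarith) (by linarith)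
    have hl1 : l < 1 := (div_lt_one (by linarith)).2 (by linarith)
    have hne : p - x ≠ 0 := by linarith
    have key : l * p + (1 - l) * x = y := by
      rw [hl, div_mul_eq_mul_div, one_sub_div hne, div_mul_eq_mul_div, ← add_div,
        div_eq_iff hne]
      ring
    have := (h x hx (by linarith) l ⟨hl0, hl1⟩).1
    rwa [key] at this

/-- Key structural lemma: a continuous strategyproof mechanism, as a function of one agent's
report, is the report clamped to the interval between the outcomes at the extreme reports. -/
lemma clamp_lemma {n : ℕ}
    (u : ℝ → ℝ → ℝ) (hu : ∀ p ∈ Set.Icc (0:ℝ) 1, SinglePeaked p (u p))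
    (f : (Fin n → ℝ) → ℝ)
    (hfr : ∀ P : Fin n → ℝ, (∀ i, P i ∈ Set.Icc (0:ℝ) 1) → f P ∈ Set.Icc (0:ℝ) 1)
    (hfc : ContinuousOn f {P : Fin n → ℝ | ∀ i, P i ∈ Set.Icc (0:ℝ) 1})
    (hfsp : ∀ P : Fin n → ℝ, (∀ i, P i ∈ Set.Icc (0:ℝ) 1) → ∀ i, ∀ p' ∈ Set.Icc (0:ℝ) 1,
        u (P i) (f (Function.update P i p')) ≤ u (P i) (f P))
    (P : Fin n → ℝ) (hP : ∀ i, P i ∈ Set.Icc (0:ℝ) 1) (i : Fin n) :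
    f P = if P i ≤ f (Function.update P i 0) then f (Function.update P i 0)
          else if f (Function.update P i 1) ≤ P i then f (Function.update P i 1)
          else P i := by
  set φ : ℝ → ℝ := fun t => f (Function.update P i t) with hφ
  have hPt : ∀ t ∈ Set.Icc (0:ℝ) 1, ∀ j, Function.update P i t j ∈ Set.Icc (0:ℝ) 1 := by
    intro t ht j
    rcases eq_or_ne j i with rfl | hj
    · simpa using ht
    · simpa [Function.update_of_ne hj] using hP j
  have hr : ∀ t ∈ Set.Icc (0:ℝ) 1, φ t ∈ Set.Icc (0:ℝ) 1 :=
    fun t ht => hfr _ (hPt t ht)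
  have hfPφ : f P = φ (P i) := by
    simp [hφ, Function.update_eq_self]
  have sp2 : ∀ p ∈ Set.Icc (0:ℝ) 1, ∀ t ∈ Set.Icc (0:ℝ) 1, u p (φ t) ≤ u p (φ p) := by
    intro p hp t ht
    have := hfsp (Function.update P i p) (hPt p hp) i t ht
    rwa [Function.update_idem, Function.update_self] at this
  have hpi := hP i
  have h01 : (0:ℝ) ∈ Set.Icc (0:ℝ) 1 := by constructor <;> norm_num
  have h11 : (1:ℝ) ∈ Set.Icc (0:ℝ) 1 := by constructor <;> norm_num
  split_ifs with h0 h1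
  · -- P i ≤ φ 0 : outcome is φ 0
    rw [hfPφ]
    have hφ0 := hr 0 h01
    have hφp := hr (P i) hpi
    -- u 0 (φ (P i)) ≤ u 0 (φ 0) and u 0 strictly anti ⇒ φ 0 ≤ φ (P i)
    have ha : φ 0 ≤ φ (P i) := by
      by_contra hc
      push_neg at hc
      have := sp_anti (hu 0 h01) h01 hφp hφ0 hφp.1 hc
      have h2 := sp2 0 h01 (P i) hpi
      linarith
    -- u (P i) (φ 0) ≤ u (P i) (φ (P i)) and strictly anti right of P i ⇒ φ (P i) ≤ φ 0
    have hb : φ (P i) ≤ φ 0 := by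
      by_contra hc
      push_neg at hc
      have := sp_anti (hu (P i) hpi) hpi hφ0 hφp h0 hc
      have h2 := sp2 (P i) hpi 0 h01
      linarith
    linarith
  · -- φ 1 ≤ P i : outcome is φ 1
    rw [hfPφ]
    have hφ1 := hr 1 h11
    have hφp := hr (P i) hpi
    have ha : φ (P i) ≤ φ 1 := by
      by_contra hc
      push_neg at hc
      have := sp_mono (hu 1 h11) h11 hφ1 hφp hc hφp.2
      have h2 := sp2 1 h11 (P i) hpi
      linarith
    have hb : φ 1 ≤ φ (P i) := by
      by_contra hc
      push_neg at hc
      have := sp_mono (hu (P i) hpi) hpi hφp hφ1 hc h1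
      have h2 := sp2 (P i) hpi 1 h11
      linarith
    linarith
  · -- φ 0 < P i < φ 1 : outcome is P i, via IVT
    push_neg at h0 h1
    classical
    have hcont : ContinuousOn φ (Set.Icc (0:ℝ) 1) := by
      apply hfc.comp (t := {P : Fin n → ℝ | ∀ j, P j ∈ Set.Icc (0:ℝ) 1})
      · exact ((continuous_const : Continuous fun _ : ℝ => P).update i
          (continuous_id : Continuous fun t : ℝ => t)).continuousOn
      · intro t ht
        exact hPt t ht
    have hmem : P i ∈ Set.Icc (φ 0) (φ 1) := ⟨le_of_lt h0, le_of_lt h1⟩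
    obtain ⟨t, ht, hφt⟩ := intermediate_value_Icc (zero_le_one) hcont hmem
    have h2 := sp2 (P i) hpi t ht
    rw [hφt] at h2
    rw [hfPφ]
    by_contra hc
    have := sp_max (hu (P i) hpi) (hr (P i) hpi) hc
    linarith

/-- two continuous strategyproof mechanisms (for two alternatives and an
arbitrary single-peaked domain) agreeing on all single-minded profiles agree everywhere. -/
theorem single_minded_determination {n : ℕ}
    (u : ℝ → ℝ → ℝ) (hu : ∀ p ∈ Set.Icc (0:ℝ) 1, SinglePeaked p (u p))
    (f g : (Fin n → ℝ) → ℝ)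
    (hfr : ∀ P : Fin n → ℝ, (∀ i, P i ∈ Set.Icc (0:ℝ) 1) → f P ∈ Set.Icc (0:ℝ) 1)
    (hgr : ∀ P : Fin n → ℝ, (∀ i, P i ∈ Set.Icc (0:ℝ) 1) → g P ∈ Set.Icc (0:ℝ) 1)
    (hfc : ContinuousOn f {P : Fin n → ℝ | ∀ i, P i ∈ Set.Icc (0:ℝ) 1})
    (hgc : ContinuousOn g {P : Fin n → ℝ | ∀ i, P i ∈ Set.Icc (0:ℝ) 1})
    (hfsp : ∀ P : Fin n → ℝ, (∀ i, P i ∈ Set.Icc (0:ℝ) 1) → ∀ i, ∀ p' ∈ Set.Icc (0:ℝ) 1,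
        u (P i) (f (Function.update P i p')) ≤ u (P i) (f P))
    (hgsp : ∀ P : Fin n → ℝ, (∀ i, P i ∈ Set.Icc (0:ℝ) 1) → ∀ i, ∀ p' ∈ Set.Icc (0:ℝ) 1,
        u (P i) (g (Function.update P i p')) ≤ u (P i) (g P))
    (heq : ∀ P : Fin n → ℝ, (∀ i, P i = 0 ∨ P i = 1) → f P = g P) :
    ∀ P : Fin n → ℝ, (∀ i, P i ∈ Set.Icc (0:ℝ) 1) → f P = g P := by
  classical
  suffices H : ∀ k : ℕ, ∀ P : Fin n → ℝ, (∀ i, P i ∈ Set.Icc (0:ℝ) 1) →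
      (Finset.univ.filter (fun i => ¬(P i = 0 ∨ P i = 1))).card = k → f P = g P by
    intro P hP
    exact H _ P hP rfl
  intro k
  induction k using Nat.strong_induction_on with
  | _ k ih =>
    intro P hP hcard
    by_cases hall : ∀ i, P i = 0 ∨ P i = 1
    · exact heq P hall
    · push_neg at hall
      obtain ⟨i, hi⟩ := hall
      have himem : i ∈ Finset.univ.filter (fun i => ¬(P i = 0 ∨ P i = 1)) := by
        simp [hi]
      -- updating coordinate i to an extreme value strictly lowers the count
      have hupd : ∀ c : ℝ, (c = 0 ∨ c = 1) →
          (Finset.univ.filter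
            (fun j => ¬(Function.update P i c j = 0 ∨ Function.update P i c j = 1))).card < k := by
        intro c hc
        have hsub : Finset.univ.filter
            (fun j => ¬(Function.update P i c j = 0 ∨ Function.update P i c j = 1)) ⊆
            (Finset.univ.filter (fun j => ¬(P j = 0 ∨ P j = 1))).erase i := by
          intro j hj
          simp only [Finset.mem_filter, Finset.mem_univ, true_and] at hj
          rcases eq_or_ne j i with rfl | hji
          · rw [Function.update_self] at hj
            exact absurd hc hj
          · rw [Function.update_of_ne hji] at hj
            exact Finset.mem_erase.2 ⟨hji, by simp only [Finset.mem_filter, Finset.mem_univ, true_and]; exact hj⟩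
        calc _ ≤ ((Finset.univ.filter (fun j => ¬(P j = 0 ∨ P j = 1))).erase i).card :=
                Finset.card_le_card hsub
          _ < (Finset.univ.filter (fun j => ¬(P j = 0 ∨ P j = 1))).card :=
                Finset.card_erase_lt_of_mem himem
          _ = k := hcard
      have hP0 : ∀ j, Function.update P i 0 j ∈ Set.Icc (0:ℝ) 1 := by
        intro j
        rcases eq_or_ne j i with rfl | hj
        · simp
        · simpa [Function.update_of_ne hj] using hP j
      have hP1 : ∀ j, Function.update P i 1 j ∈ Set.Icc (0:ℝ) 1 := by
        intro j
        rcases eq_or_ne j i with rfl | hj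
        · simp
        · simpa [Function.update_of_ne hj] using hP j
      have h0 : f (Function.update P i 0) = g (Function.update P i 0) :=
        ih _ (hupd 0 (Or.inl rfl)) _ hP0 rfl
      have h1 : f (Function.update P i 1) = g (Function.update P i 1) :=
        ih _ (hupd 1 (Or.inr rfl)) _ hP1 rfl
      rw [clamp_lemma u hu f hfr hfc hfsp P hP i,
          clamp_lemma u hu g hgr hgc hgsp P hP i, h0, h1]
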